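/- (Pure-model algorithmic threshold, balanced case.) Fix positive integers a₁, …, a_r with Σ_s a_s ≥ 3 and weights λ_s = a_s / (Σ_{s'} a_{s'}). Then the supremum of 2 Σ_s √(λ_s a_s b_s (1 − b_s)) over vectors b ∈ [0,1]^r with Σ_s a_s b_s = 1 is uniquely attained at b_s = 1/(Σ_{s'} a_{s'}) for all s, and the supremum value equals 2 √((A − 1)/A) where A = Σ_s a_s. -/

import Mathlib

open scoped BigOperators

lemma key_le (A x : ℝ) (hA : 2 ≤ A) (hx : 0 ≤ x) (hx1 : x ≤ 1) :
    2 * Real.sqrt (A - 1) * Real.sqrt (x * (1 - x)) ≤ 1 + (A - 2) * x := by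
  have h1 : (0:ℝ) ≤ A - 1 := by linarith
  have h2 : (0:ℝ) ≤ x * (1 - x) := mul_nonneg hx (by linarith)
  have hu := Real.sq_sqrt h1
  have hv := Real.sq_sqrt h2
  have hu0 := Real.sqrt_nonneg (A - 1)
  have hv0 := Real.sqrt_nonneg (x * (1 - x))
  set u := Real.sqrt (A - 1)
  set v := Real.sqrt (x * (1 - x))
  have key : (1 + (A-2)*x - 2*u*v) * (1 + (A-2)*x + 2*u*v) = (1 - A*x)^2 := by
    linear_combination (-4 * v^2) * hu - (4*(A-1)) * hv
  have hst : 0 < 1 + (A-2)*x + 2*u*v := by nlinarith [mul_nonneg hu0 hv0]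
  have h3 : 0 ≤ (1 + (A-2)*x - 2*u*v) * (1 + (A-2)*x + 2*u*v) := key ▸ sq_nonneg _
  nlinarith [(mul_nonneg_iff_of_pos_right hst).mp h3]

lemma key_eq (A x : ℝ) (hA : 2 ≤ A) (hx : 0 ≤ x) (hx1 : x ≤ 1)
    (h : 2 * Real.sqrt (A - 1) * Real.sqrt (x * (1 - x)) = 1 + (A - 2) * x) :
    x = A⁻¹ := by
  have h1 : (0:ℝ) ≤ A - 1 := by linarith
  have h2 : (0:ℝ) ≤ x * (1 - x) := mul_nonneg hx (by linarith)
  have hu := Real.sq_sqrt h1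
  have hv := Real.sq_sqrt h2
  have hsq : (2 * Real.sqrt (A-1) * Real.sqrt (x*(1-x)))^2 = (1 + (A-2)*x)^2 := by rw [h]
  have h0 : (1 - A * x)^2 = 0 := by nlinarith [hsq, hu, hv]
  have hAx : A * x = 1 := by nlinarith [sq_nonneg (1 - A*x)]
  have hA0 : A ≠ 0 := by positivity
  field_simp
  linarith

/-- The one-step pure-model objective `2 Σ_s √(λ_s a_s b_s (1 − b_s))` with weights
`λ_s = a_s / A`, `A = Σ_s a_s`. -/
noncomputable def pureObj (r : ℕ) (a : Fin r → ℕ) (b : Fin r → ℝ) : ℝ :=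
  2 * ∑ s, Real.sqrt (((a s : ℝ) / (∑ s', (a s' : ℝ))) * (a s : ℝ) * b s * (1 - b s))

/-- Pure-model algorithmic threshold, balanced case: with `λ_s = a_s / A` and
`A = Σ_s a_s ≥ 3`, the supremum of `2 Σ_s √(λ_s a_s b_s (1 − b_s))` over `b ∈ [0,1]^r`
with `Σ_s a_s b_s = 1` is uniquely attained at `b_s = 1/A`, where it equals
`2 √((A − 1)/A)`. -/
theorem stmt_14 (r : ℕ) (a : Fin r → ℕ) (ha : ∀ s, 0 < a s) (hA : 3 ≤ ∑ s, a s) :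
    (pureObj r a (fun _ => (∑ s', (a s' : ℝ))⁻¹)
        = 2 * Real.sqrt (((∑ s', (a s' : ℝ)) - 1) / (∑ s', (a s' : ℝ))))
    ∧ ∀ b : Fin r → ℝ, (∀ s, b s ∈ Set.Icc (0 : ℝ) 1) → (∑ s, (a s : ℝ) * b s = 1) →
        pureObj r a b ≤ 2 * Real.sqrt (((∑ s', (a s' : ℝ)) - 1) / (∑ s', (a s' : ℝ)))
        ∧ (pureObj r a b = 2 * Real.sqrt (((∑ s', (a s' : ℝ)) - 1) / (∑ s', (a s' : ℝ)))
            → b = fun _ => (∑ s', (a s' : ℝ))⁻¹) := by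
  have hA3 : (3:ℝ) ≤ ∑ s', (a s' : ℝ) := by exact_mod_cast hA
  set A : ℝ := ∑ s', (a s' : ℝ) with hAdef
  have hApos : 0 < A := by linarith
  have hA1 : (0:ℝ) ≤ A - 1 := by linarith
  set c : ℝ := Real.sqrt (A - 1) with hcdef
  set d : ℝ := Real.sqrt A with hddef
  have hc2 : c^2 = A - 1 := Real.sq_sqrt hA1
  have hd2 : d^2 = A := Real.sq_sqrt hApos.le
  have hcpos : 0 < c := Real.sqrt_pos.mpr (by linarith)
  have hdpos : 0 < d := Real.sqrt_pos.mpr hApos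
  -- rewriting of pureObj
  have hterm : ∀ (x : ℝ) (s : Fin r),
      Real.sqrt (((a s : ℝ) / A) * (a s : ℝ) * x * (1 - x))
        = ((a s : ℝ) / d) * Real.sqrt (x * (1 - x)) := by
    intro x s
    have h1 : ((a s : ℝ) / A) * (a s : ℝ) * x * (1 - x)
        = ((a s : ℝ) / d)^2 * (x * (1 - x)) := by
      rw [div_pow, hd2]; ring
    rw [h1, Real.sqrt_mul (sq_nonneg _), Real.sqrt_sq (by positivity)]
  have hobj : ∀ b : Fin r → ℝ,
      pureObj r a b = 2 * ∑ s, ((a s : ℝ) / d) * Real.sqrt (b s * (1 - b s)) := by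
    intro b
    unfold pureObj
    rw [← hAdef]
    congr 1
    exact Finset.sum_congr rfl fun s _ => hterm (b s) s
  -- the target value
  have htarget : 2 * Real.sqrt ((A - 1) / A) = 2 * (c / d) := by
    rw [Real.sqrt_div hA1]
  constructor
  · -- value at the balanced point
    rw [hobj, htarget]
    congr 1
    have hx : A⁻¹ * (1 - A⁻¹) = (A - 1) / A^2 := by
      have hA0 : A ≠ 0 := hApos.ne'
      field_simp
    have hsq : Real.sqrt (A⁻¹ * (1 - A⁻¹)) = c / A := by
      rw [hx, Real.sqrt_div hA1, Real.sqrt_sq hApos.le]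
    calc ∑ s : Fin r, ((a s : ℝ) / d) * Real.sqrt (A⁻¹ * (1 - A⁻¹))
        = ∑ s : Fin r, (a s : ℝ) * (c / (d * A)) := by
          refine Finset.sum_congr rfl fun s _ => ?_
          rw [hsq]; ring
      _ = A * (c / (d * A)) := by rw [← Finset.sum_mul]
      _ = c / d := by field_simp
  · intro b hb hsum
    have hb0 : ∀ s, 0 ≤ b s := fun s => (hb s).1
    have hb1 : ∀ s, b s ≤ 1 := fun s => (hb s).2
    -- tangent bound per term
    have hA2 : (2:ℝ) ≤ A := by linarith
    have hle : ∀ s : Fin r, ((a s : ℝ) / d) * Real.sqrt (b s * (1 - b s))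
        ≤ ((a s : ℝ) / d) * ((1 + (A - 2) * b s) / (2 * c)) := by
      intro s
      refine mul_le_mul_of_nonneg_left ?_ (by positivity)
      rw [le_div_iff₀ (by positivity)]
      have := key_le A (b s) hA2 (hb0 s) (hb1 s)
      linarith [key_le A (b s) hA2 (hb0 s) (hb1 s)]
    -- value of the tangent sum
    have hSsum : ∑ s, ((a s : ℝ) / d) * ((1 + (A - 2) * b s) / (2 * c)) = c / d := by
      calc ∑ s, ((a s : ℝ) / d) * ((1 + (A - 2) * b s) / (2 * c))
          = ∑ s, ((a s : ℝ) + (A - 2) * ((a s : ℝ) * b s)) * (2 * c * d)⁻¹ := by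
            refine Finset.sum_congr rfl fun s _ => ?_
            field_simp
        _ = (A + (A - 2) * 1) * (2 * c * d)⁻¹ := by
            rw [← Finset.sum_mul, Finset.sum_add_distrib, ← Finset.mul_sum, hsum, ← hAdef]
        _ = c / d := by
            have : A + (A - 2) * 1 = 2 * c^2 := by rw [hc2]; ring
            rw [this]; field_simp
    have hbound : pureObj r a b ≤ 2 * (c / d) := by
      rw [hobj]
      have hss : ∑ s, ((a s : ℝ) / d) * Real.sqrt (b s * (1 - b s))
          ≤ ∑ s, ((a s : ℝ) / d) * ((1 + (A - 2) * b s) / (2 * c)) :=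
        Finset.sum_le_sum (fun s _ => hle s)
      rw [hSsum] at hss
      linarith
    refine ⟨htarget ▸ hbound, ?_⟩
    intro heq
    rw [htarget] at heq
    rw [hobj] at heq
    have hsum_eq : ∑ s, ((a s : ℝ) / d) * Real.sqrt (b s * (1 - b s)) = c / d := by
      linarith
    -- slack sum is zero
    have hslack : ∑ s, (((a s : ℝ) / d) * ((1 + (A - 2) * b s) / (2 * c))
        - ((a s : ℝ) / d) * Real.sqrt (b s * (1 - b s))) = 0 := by
      rw [Finset.sum_sub_distrib, hSsum, hsum_eq, sub_self]
    have hzero := (Finset.sum_eq_zero_iff_of_nonneg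
      (fun s _ => sub_nonneg.mpr (hle s))).mp hslack
    funext s
    have hz := hzero s (Finset.mem_univ s)
    have hads : (0:ℝ) < (a s : ℝ) / d := by
      have := ha s
      positivity
    have heq2 : Real.sqrt (b s * (1 - b s)) = (1 + (A - 2) * b s) / (2 * c) := by
      have h' : ((a s : ℝ) / d) * ((1 + (A - 2) * b s) / (2 * c))
          = ((a s : ℝ) / d) * Real.sqrt (b s * (1 - b s)) := by linarith
      exact (mul_left_cancel₀ (ne_of_gt hads) h').symm
    have heq3 : 2 * c * Real.sqrt (b s * (1 - b s)) = 1 + (A - 2) * b s := by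
      rw [heq2]; field_simp
    exact key_eq A (b s) hA2 (hb0 s) (hb1 s) heq3
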